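/- The convex hull of the image of the quadratic map equals the image of the semidefinite relaxation obtained by dropping the rank constraint: convexHull ℝ (Set.range f) = {y : Fin m → ℝ | ∃ X : Matrix (Fin (n+1)) (Fin (n+1)) ℝ, X.PosSemidef ∧ X (Fin.last n) (Fin.last n) = 1 ∧ ∀ k, (H k * X).trace = y k}. -/

import Mathlib

open Matrix

private lemma sdp_dot_symm {n : ℕ} (M : Matrix (Fin n) (Fin n) ℝ) (hM : Mᵀ = M)
    (u x : Fin n → ℝ) : u ⬝ᵥ M *ᵥ x = x ⬝ᵥ M *ᵥ u := by
  rw [dotProduct_mulVec, ← mulVec_transpose, hM, dotProduct_comm]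

private lemma sdp_qf {n : ℕ} (A : Matrix (Fin n) (Fin n) ℝ) (b : Fin n → ℝ)
    (w : Fin (n+1) → ℝ) :
    w ⬝ᵥ (Matrix.reindex finSumFinEquiv finSumFinEquiv
      (Matrix.fromBlocks A (Matrix.replicateCol (Fin 1) b) (Matrix.replicateRow (Fin 1) b) 0)) *ᵥ w
    = (w ∘ Fin.castSucc) ⬝ᵥ A *ᵥ (w ∘ Fin.castSucc)
      + 2 * w (Fin.last n) * (b ⬝ᵥ (w ∘ Fin.castSucc)) := by
  have hcs : ∀ i : Fin n, (finSumFinEquiv.symm (Fin.castSucc i) : Fin n ⊕ Fin 1) = Sum.inl i := by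
    intro i
    have : Fin.castSucc i = Fin.castAdd 1 i := rfl
    rw [this, finSumFinEquiv_symm_apply_castAdd]
  simp only [dotProduct, mulVec, reindex_apply, submatrix_apply, Fin.sum_univ_castSucc,
    hcs, finSumFinEquiv_symm_last, fromBlocks_apply₁₁, fromBlocks_apply₁₂,
    fromBlocks_apply₂₁, fromBlocks_apply₂₂, replicateCol_apply, replicateRow_apply, Matrix.zero_apply,
    Function.comp_apply, Finset.mul_sum, Finset.sum_mul]
  simp only [mul_add, Finset.sum_add_distrib, Finset.mul_sum, zero_mul, mul_zero, add_zero]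
  rw [add_assoc]
  congr 1
  rw [← Finset.sum_add_distrib]
  exact Finset.sum_congr rfl fun i _ => by ring

private lemma sdp_trace_quad {N : ℕ} (M B : Matrix (Fin N) (Fin N) ℝ) :
    (M * (Bᴴ * B)).trace = ∑ i, (B i) ⬝ᵥ M *ᵥ (B i) := by
  simp only [trace, diag_apply, mul_apply, conjTranspose_apply, star_trivial, dotProduct,
    mulVec, Finset.mul_sum, Finset.sum_mul]
  refine Eq.trans (Finset.sum_congr rfl fun d _ => Finset.sum_comm) ?_
  rw [Finset.sum_comm]
  exact Finset.sum_congr rfl fun i _ => Finset.sum_congr rfl fun p _ =>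
    Finset.sum_congr rfl fun q _ => by ring

private lemma sdp_trace_vecMulVec {N : ℕ} (M : Matrix (Fin N) (Fin N) ℝ) (v : Fin N → ℝ) :
    (M * vecMulVec v v).trace = v ⬝ᵥ M *ᵥ v := by
  simp only [trace, diag_apply, mul_apply, vecMulVec_apply, dotProduct, mulVec,
    Finset.mul_sum, Finset.sum_mul]
  exact Finset.sum_congr rfl fun p _ => Finset.sum_congr rfl fun q _ => by ring

private lemma sdp_psd_vecMulVec {N : ℕ} (v : Fin N → ℝ) : (vecMulVec v v).PosSemidef := by
  refine PosSemidef.of_dotProduct_mulVec_nonneg ?_ ?_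
  · ext i j
    simp [conjTranspose_apply, vecMulVec_apply, mul_comm]
  · intro z
    have : star z ⬝ᵥ (vecMulVec v v) *ᵥ z = (v ⬝ᵥ z) * (v ⬝ᵥ z) := by
      simp only [star_trivial, dotProduct, mulVec, vecMulVec_apply, Finset.mul_sum,
        Finset.sum_mul]
      rw [Finset.sum_comm]
      exact Finset.sum_congr rfl fun p _ => Finset.sum_congr rfl fun q _ => by ring
    rw [this]
    exact mul_self_nonneg _

private lemma sdp_psd_smul {N : ℕ} {X : Matrix (Fin N) (Fin N) ℝ} (hX : X.PosSemidef)
    {a : ℝ} (ha : 0 ≤ a) : (a • X).PosSemidef := by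
  refine PosSemidef.of_dotProduct_mulVec_nonneg ?_ fun z => ?_
  · ext i j
    have := congrFun (congrFun hX.1 i) j
    simp only [conjTranspose_apply, Matrix.smul_apply, star_trivial, smul_eq_mul] at this ⊢
    rw [this]
  · rw [smul_mulVec, dotProduct_smul, smul_eq_mul]
    exact mul_nonneg ha (hX.dotProduct_mulVec_nonneg z)

private lemma sdp_absorb {n m : ℕ} {ι : Type*}
    (A : Fin m → Matrix (Fin n) (Fin n) ℝ) (hA : ∀ k, (A k)ᵀ = A k)
    (b : Fin m → (Fin n → ℝ)) (f : (Fin n → ℝ) → (Fin m → ℝ))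
    (hf : ∀ x k, f x k = x ⬝ᵥ (A k).mulVec x + 2 * (b k ⬝ᵥ x))
    (s : Finset ι) (u : ι → Fin n → ℝ) :
    ∀ x : Fin n → ℝ,
      (f x + ∑ i ∈ s, fun k => u i ⬝ᵥ (A k) *ᵥ (u i)) ∈ convexHull ℝ (Set.range f) := by
  induction s using Finset.cons_induction with
  | empty => intro x; simpa using subset_convexHull ℝ _ (Set.mem_range_self x)
  | cons a s ha ih =>
      intro x
      have key : (f x + ∑ i ∈ Finset.cons a s ha, fun k => u i ⬝ᵥ (A k) *ᵥ (u i))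
          = (1/2 : ℝ) • (f (x + u a) + ∑ i ∈ s, fun k => u i ⬝ᵥ (A k) *ᵥ (u i))
            + (1/2 : ℝ) • (f (x - u a) + ∑ i ∈ s, fun k => u i ⬝ᵥ (A k) *ᵥ (u i)) := by
        rw [Finset.sum_cons]
        funext k
        have hsymm : (u a) ⬝ᵥ (A k) *ᵥ x = x ⬝ᵥ (A k) *ᵥ (u a) := sdp_dot_symm _ (hA k) _ _
        simp only [Pi.add_apply, Pi.smul_apply, smul_eq_mul, Finset.sum_apply, hf,
          Matrix.mulVec_add, Matrix.mulVec_sub, dotProduct_add, dotProduct_sub,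
          add_dotProduct, sub_dotProduct, hsymm]
        ring
      rw [key]
      exact (convex_convexHull ℝ _) (ih _) (ih _) (by norm_num) (by norm_num) (by norm_num)

theorem convexHull_image_eq_sdp_relaxation (n m : ℕ)
    (A : Fin m → Matrix (Fin n) (Fin n) ℝ) (hA : ∀ k, (A k)ᵀ = A k)
    (b : Fin m → (Fin n → ℝ))
    (f : (Fin n → ℝ) → (Fin m → ℝ))
    (hf : ∀ x k, f x k = x ⬝ᵥ (A k).mulVec x + 2 * (b k ⬝ᵥ x))
    (H : Fin m → Matrix (Fin (n + 1)) (Fin (n + 1)) ℝ)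
    (hH : ∀ k, H k = Matrix.reindex finSumFinEquiv finSumFinEquiv
      (Matrix.fromBlocks (A k) (Matrix.replicateCol (Fin 1) (b k)) (Matrix.replicateRow (Fin 1) (b k)) 0)) :
    convexHull ℝ (Set.range f) =
      {y : Fin m → ℝ | ∃ X : Matrix (Fin (n + 1)) (Fin (n + 1)) ℝ,
        X.PosSemidef ∧ X (Fin.last n) (Fin.last n) = 1 ∧ ∀ k, (H k * X).trace = y k} := by
  have hqf : ∀ (k : Fin m) (w : Fin (n+1) → ℝ),
      w ⬝ᵥ (H k) *ᵥ w = (w ∘ Fin.castSucc) ⬝ᵥ (A k) *ᵥ (w ∘ Fin.castSucc)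
        + 2 * w (Fin.last n) * (b k ⬝ᵥ (w ∘ Fin.castSucc)) := by
    intro k w
    rw [hH k]
    exact sdp_qf (A k) (b k) w
  apply Set.Subset.antisymm
  · -- convex hull ⊆ SDP set
    apply convexHull_min
    · rintro _ ⟨x, rfl⟩
      refine ⟨vecMulVec (Fin.snoc x 1) (Fin.snoc x 1), sdp_psd_vecMulVec _, ?_, ?_⟩
      · simp [vecMulVec_apply]
      · intro k
        rw [sdp_trace_vecMulVec, hqf]
        have h1 : (Fin.snoc x 1 : Fin (n+1) → ℝ) ∘ Fin.castSucc = x := by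
          funext i; simp
        have h2 : (Fin.snoc x 1 : Fin (n+1) → ℝ) (Fin.last n) = 1 := by simp
        rw [h1, h2, hf]
        ring
    · -- the SDP set is convex
      rintro y₁ ⟨X₁, hX₁, hc₁, ht₁⟩ y₂ ⟨X₂, hX₂, hc₂, ht₂⟩ a c ha hc hac
      refine ⟨a • X₁ + c • X₂, (sdp_psd_smul hX₁ ha).add (sdp_psd_smul hX₂ hc), ?_, ?_⟩
      · simp only [Matrix.add_apply, Matrix.smul_apply, hc₁, hc₂, smul_eq_mul, mul_one]
        exact hac
      · intro k
        rw [mul_add, trace_add, Matrix.mul_smul, Matrix.mul_smul, trace_smul, trace_smul,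
          smul_eq_mul, smul_eq_mul, ht₁ k, ht₂ k]
        simp
  · -- SDP set ⊆ convex hull
    rintro y ⟨X, hX, hone, htr⟩
    obtain ⟨B, hB⟩ : ∃ B : Matrix (Fin (n+1)) (Fin (n+1)) ℝ, X = Bᴴ * B := by
      open scoped MatrixOrder in
      obtain ⟨B, hB⟩ := CStarAlgebra.nonneg_iff_eq_star_mul_self.mp hX.nonneg
      exact ⟨B, by rw [hB, star_eq_conjTranspose]⟩
    set t : Fin (n+1) → ℝ := fun i => B i (Fin.last n) with ht
    set v : Fin (n+1) → Fin n → ℝ := fun i => (B i) ∘ Fin.castSucc with hv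
    have hy : ∀ k, y k = ∑ i,
        (v i ⬝ᵥ (A k) *ᵥ v i + 2 * t i * (b k ⬝ᵥ v i)) := by
      intro k
      rw [← htr k, hB, sdp_trace_quad]
      exact Finset.sum_congr rfl fun i _ => hqf k (B i)
    have hsum : ∑ i, (t i) ^ 2 = 1 := by
      rw [hB] at hone
      simp only [mul_apply, conjTranspose_apply, star_trivial] at hone
      rw [← hone]
      exact Finset.sum_congr rfl fun i _ => by rw [sq]
    have hex : ∃ i0, t i0 ≠ 0 := by
      by_contra h
      push_neg at h
      have h0 : (∑ i, (t i) ^ 2) = 0 := Finset.sum_eq_zero fun i _ => by rw [h i]; ring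
      rw [h0] at hsum
      norm_num at hsum
    obtain ⟨i0, hi0⟩ := hex
    classical
    set S₀ : Finset (Fin (n+1)) := Finset.univ.filter (fun i => t i = 0) with hS₀
    set S₁ : Finset (Fin (n+1)) := Finset.univ.filter (fun i => ¬ t i = 0) with hS₁
    have hi0S₁ : i0 ∈ S₁ := by simp [hS₁, hi0]
    set q : (Fin n → ℝ) → (Fin m → ℝ) := fun u => fun k => u ⬝ᵥ (A k) *ᵥ u with hq
    have hqscale : ∀ (c : ℝ) (u : Fin n → ℝ) (k : Fin m),
        q (c • u) k = c ^ 2 * q u k := by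
      intro c u k
      simp only [hq, smul_dotProduct, Matrix.mulVec_smul, dotProduct_smul, smul_eq_mul]
      ring
    set z : Fin (n+1) → (Fin m → ℝ) := fun i =>
      if i = i0 then f ((t i0)⁻¹ • v i0) + ∑ j ∈ S₀, q ((t i0)⁻¹ • v j)
      else f ((t i)⁻¹ • v i) with hz
    have hzmem : ∀ i ∈ S₁, z i ∈ convexHull ℝ (Set.range f) := by
      intro i _
      by_cases h : i = i0
      · rw [hz]
        simp only [h, if_pos rfl]
        exact sdp_absorb A hA b f hf S₀ (fun j => (t i0)⁻¹ • v j) _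
      · rw [hz]
        simp only [if_neg h]
        exact subset_convexHull ℝ _ (Set.mem_range_self _)
    have hwsum : ∑ i ∈ S₁, (t i) ^ 2 = 1 := by
      rw [← hsum]
      rw [Finset.sum_filter]
      exact Finset.sum_congr rfl fun i _ => by by_cases h : t i = 0 <;> simp [h]
    have hfscale : ∀ (i : Fin (n+1)), t i ≠ 0 → ∀ k,
        (t i) ^ 2 * f ((t i)⁻¹ • v i) k = v i ⬝ᵥ (A k) *ᵥ v i + 2 * t i * (b k ⬝ᵥ v i) := by
      intro i hti k
      rw [hf]
      simp only [smul_dotProduct, Matrix.mulVec_smul, dotProduct_smul, smul_eq_mul]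
      field_simp
    have key : ∑ i ∈ S₁, (t i) ^ 2 • z i = y := by
      funext k
      simp only [Finset.sum_apply, Pi.smul_apply, smul_eq_mul]
      rw [hy k]
      rw [← Finset.sum_filter_add_sum_filter_not Finset.univ (fun i => t i = 0)
        (fun i => v i ⬝ᵥ (A k) *ᵥ v i + 2 * t i * (b k ⬝ᵥ v i))]
      have h₀ : ∑ i ∈ Finset.univ.filter (fun i => t i = 0),
          (v i ⬝ᵥ (A k) *ᵥ v i + 2 * t i * (b k ⬝ᵥ v i))
          = ∑ i ∈ S₀, q (v i) k := by
        refine Finset.sum_congr rfl fun i hi => ?_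
        have : t i = 0 := by simpa [hS₀] using (Finset.mem_filter.mp hi).2
        simp [hq, this]
      rw [h₀]
      rw [← Finset.add_sum_erase _ _ hi0S₁,
        ← Finset.add_sum_erase _ (fun i => v i ⬝ᵥ (A k) *ᵥ v i + 2 * t i * (b k ⬝ᵥ v i)) hi0S₁]
      have hz0 : (t i0) ^ 2 * z i0 k
          = (v i0 ⬝ᵥ (A k) *ᵥ v i0 + 2 * t i0 * (b k ⬝ᵥ v i0)) + ∑ i ∈ S₀, q (v i) k := by
        rw [hz]
        simp only [eq_self_iff_true, if_true, Pi.add_apply, Finset.sum_apply]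
        rw [mul_add, hfscale i0 hi0 k]
        congr 1
        rw [Finset.mul_sum]
        refine Finset.sum_congr rfl fun j _ => ?_
        rw [hqscale]
        have : ((t i0)⁻¹) ^ 2 = ((t i0) ^ 2)⁻¹ := by
          rw [inv_pow]
        rw [this]
        field_simp
      have hrest : ∑ i ∈ S₁.erase i0, (t i) ^ 2 * z i k
          = ∑ i ∈ S₁.erase i0, (v i ⬝ᵥ (A k) *ᵥ v i + 2 * t i * (b k ⬝ᵥ v i)) := by
        refine Finset.sum_congr rfl fun i hi => ?_
        have hne : i ≠ i0 := (Finset.mem_erase.mp hi).1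
        have hti : t i ≠ 0 := by
          have := (Finset.mem_erase.mp hi).2
          simpa [hS₁] using (Finset.mem_filter.mp this).2
        rw [hz]
        simp only [if_neg hne]
        exact hfscale i hti k
      rw [hz0, hrest]
      ring
    rw [← key]
    exact Convex.sum_mem (convex_convexHull ℝ _) (fun i _ => sq_nonneg _) hwsum hzmem
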